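/- Let d ≥ 1 and let Ω = [0,1]ᵈ ⊂ ℝᵈ be the closed unit cube with outward unit normal ν on its boundary ∂Ω. Let T > 0, β ∈ ℝ, M, R ≥ 1, Γ = (γ_{i,p}) ∈ ℝ^{M×R}, let V_{1,i} : ℝ → ℝ be continuous with V_{1,i} > 0 on ℝ for 1 ≤ i ≤ M, let V_{2,p} : ℝᴹ → ℝ be continuous with V_{2,p} > 0 on ℝᴹ for 1 ≤ p ≤ R, and let E₁, …, E_M : ℝ → ℝ be twice continuously differentiable. Let ρᵢ : [0,T] × Ω → ℝ be continuously differentiable, let mᵢ : [0,T] × Ω → ℝᵈ be continuous and continuously differentiable in x with mᵢ·ν = 0 on [0,T] × ∂Ω, and let s_p : [0,T] × Ω → ℝ be continuous, such that ∂ₜρᵢ + ∇·mᵢ − Σ_{p=1}^{R}γ_{i,p}s_p = 0 on [0,T] × Ω for all 1 ≤ i ≤ M. Define m̃ᵢ = mᵢ + βV_{1,i}(ρᵢ)∇(Eᵢ′(ρᵢ)) and s̃_p = s_p + βV_{2,p}(ρ)Σ_{j=1}^{M}γ_{j,p}Eⱼ′(ρⱼ), where ρ = (ρ₁,…,ρ_M).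 Then ∫₀ᵀ∫_Ω [ Σ_{i=1}^{M} ‖m̃ᵢ‖²/(2V_{1,i}(ρᵢ)) + Σ_{p=1}^{R} |s̃_p|²/(2V_{2,p}(ρ)) ] dx dt = ∫₀ᵀ∫_Ω [ Σ_{i=1}^{M} ( ‖mᵢ‖²/(2V_{1,i}(ρᵢ)) + (β²/2)V_{1,i}(ρᵢ)‖∇(Eᵢ′(ρᵢ))‖² ) + Σ_{p=1}^{R} ( |s_p|²/(2V_{2,p}(ρ)) + (β²/2)V_{2,p}(ρ)|Σ_{j=1}^{M}γ_{j,p}Eⱼ′(ρⱼ)|² ) ] dx dt + β Σ_{i=1}^{M} ∫_Ω ( Eᵢ(ρᵢ(T,x)) − Eᵢ(ρᵢ(0,x)) ) dx. -/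

import Mathlib

open MeasureTheory

/-- `i`-th partial derivative of a scalar field on `ℝᵈ`. -/
noncomputable def pd (d : ℕ) (f : (Fin d → ℝ) → ℝ) (i : Fin d) (x : Fin d → ℝ) : ℝ :=
  fderiv ℝ f x (Pi.single i 1)

/-- Divergence of a vector field on `ℝᵈ`. -/
noncomputable def divg (d : ℕ) (F : (Fin d → ℝ) → (Fin d → ℝ)) (x : Fin d → ℝ) : ℝ :=
  ∑ i, pd d (fun y => F y i) i x

lemma aux_pd_full {d : ℕ} (Φ : ℝ × (Fin d → ℝ) → ℝ)
    (hΦ : ContDiff ℝ 1 Φ) (t : ℝ) (x : Fin d → ℝ) (j : Fin d) :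
    pd d (fun z => Φ (t, z)) j x = fderiv ℝ Φ (t, x) (0, Pi.single j 1) := by
  have h := (hΦ.differentiable one_ne_zero (t, x)).hasFDerivAt
  have hin : HasFDerivAt (fun z : Fin d → ℝ => (t, z))
      (((0 : (Fin d → ℝ) →L[ℝ] ℝ)).prod (ContinuousLinearMap.id ℝ _)) x :=
    (hasFDerivAt_const t x).prodMk (hasFDerivAt_id x)
  have h2 : HasFDerivAt (fun z : Fin d → ℝ => Φ (t, z))
      ((fderiv ℝ Φ (t, x)).comp
        (((0 : (Fin d → ℝ) →L[ℝ] ℝ)).prod (ContinuousLinearMap.id ℝ _))) x := h.comp x hin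
  rw [pd, h2.fderiv]
  simp

lemma aux_deriv_full {d : ℕ} (Φ : ℝ × (Fin d → ℝ) → ℝ)
    (hΦ : ContDiff ℝ 1 Φ) (t : ℝ) (x : Fin d → ℝ) :
    HasDerivAt (fun τ => Φ (τ, x)) (fderiv ℝ Φ (t, x) (1, 0)) t := by
  have h := (hΦ.differentiable one_ne_zero (t, x)).hasFDerivAt
  have hin : HasFDerivAt (fun τ : ℝ => (τ, x))
      ((ContinuousLinearMap.id ℝ ℝ).prod (0 : ℝ →L[ℝ] (Fin d → ℝ))) t :=
    (hasFDerivAt_id t).prodMk (hasFDerivAt_const x t)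
  have h2 := (h.comp t hin).hasDerivAt
  exact h2

lemma aux_cont_fderiv_apply {d : ℕ} (Φ : ℝ × (Fin d → ℝ) → ℝ)
    (hΦ : ContDiff ℝ 1 Φ) (v : ℝ × (Fin d → ℝ)) :
    Continuous (fun q => fderiv ℝ Φ q v) :=
  (hΦ.continuous_fderiv one_ne_zero).clm_apply continuous_const

lemma aux_mem_frontier {d : ℕ} (x : Fin d → ℝ) (hx : x ∈ Set.Icc (0 : Fin d → ℝ) 1)
    (j : Fin d) (hj : x j = 0 ∨ x j = 1) :
    x ∈ frontier (Set.Icc (0 : Fin d → ℝ) 1) := by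
  rw [isClosed_Icc.frontier_eq]
  refine ⟨hx, fun hint => ?_⟩
  rw [← Set.pi_univ_Icc, interior_pi_set Set.finite_univ] at hint
  have := hint j (Set.mem_univ j)
  simp only [Pi.zero_apply, Pi.one_apply, interior_Icc, Set.mem_Ioo] at this
  rcases hj with h | h <;> rw [h] at this <;> linarith [this.1, this.2]

lemma aux_div_thm {n : ℕ} (F : (Fin (n + 1) → ℝ) → Fin (n + 1) → ℝ)
    (hF : ∀ j, ContDiff ℝ 1 (fun x => F x j))
    (hb : ∀ x ∈ Set.Icc (0 : Fin (n + 1) → ℝ) 1, ∀ j, (x j = 0 ∨ x j = 1) → F x j = 0) :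
    ∫ x in Set.Icc (0 : Fin (n + 1) → ℝ) 1, divg (n + 1) F x = 0 := by
  have key := integral_divergence_of_hasFDerivAt_off_countable'
    (0 : Fin (n + 1) → ℝ) 1 zero_le_one (fun j x => F x j)
    (fun j x => fderiv ℝ (fun y => F y j) x) ∅ Set.countable_empty
    (fun j => ((hF j).continuous).continuousOn)
    (fun x _ j => ((hF j).differentiable one_ne_zero x).hasFDerivAt)
    ?_
  · rw [show (fun x => divg (n+1) F x)
        = fun x => ∑ j, fderiv ℝ (fun y => F y j) x (Pi.single j 1) from rfl] at *
    rw [key]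
    refine Finset.sum_eq_zero fun j _ => ?_
    have hface : ∀ (c : ℝ), c = 0 ∨ c = 1 →
        (∫ x in Set.Icc ((0 : Fin (n+1) → ℝ) ∘ j.succAbove) ((1 : Fin (n+1) → ℝ) ∘ j.succAbove),
          F (j.insertNth c x) j) = 0 := by
      intro c hc
      rw [setIntegral_congr_fun measurableSet_Icc (g := fun _ => (0:ℝ)), integral_zero]
      intro y hy
      refine hb _ ?_ j ?_
      · rw [Fin.insertNth_mem_Icc]
        constructor
        · rcases hc with h | h <;> simp [h]
        · exact hy
      · simpa using hc
    simp only [Pi.one_apply, Pi.zero_apply]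
    rw [hface 1 (Or.inr rfl), hface 0 (Or.inl rfl), sub_zero]
  · refine (ContinuousOn.integrableOn_compact isCompact_Icc ?_)
    refine Continuous.continuousOn ?_
    exact continuous_finset_sum _ fun j _ =>
      ((hF j).continuous_fderiv one_ne_zero).clm_apply continuous_const

lemma aux_sum_sq_div {ι : Type*} [Fintype ι] (a b : ι → ℝ) (β V : ℝ) (hV : 0 < V) :
    (∑ j, (a j + β * (V * b j)) ^ 2) / (2 * V)
      = (∑ j, (a j) ^ 2) / (2 * V) + (β ^ 2 / 2) * V * (∑ j, (b j) ^ 2)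
        + β * (∑ j, a j * b j) := by
  have hne : (2 * V) ≠ 0 := by positivity
  rw [div_add' _ _ _ hne, div_add' _ _ _ hne, div_eq_div_iff hne hne]
  rw [Finset.sum_congr rfl (fun j (_ : j ∈ Finset.univ) =>
    (by ring : (a j + β * (V * b j)) ^ 2
      = (a j) ^ 2 + ((β ^ 2 / 2) * V * (2 * V)) * (b j) ^ 2 + (β * (2 * V)) * (a j * b j))),
    Finset.sum_add_distrib, Finset.sum_add_distrib, ← Finset.mul_sum, ← Finset.mul_sum]
  ring

lemma aux_main_core {n : ℕ} {T : ℝ} (hT : 0 < T) (β : ℝ)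
    (L Rr C Ψ : ℝ → (Fin (n + 1) → ℝ) → ℝ) (D : (Fin (n + 1) → ℝ) → ℝ)
    (cL : Continuous fun q : ℝ × (Fin (n + 1) → ℝ) => L q.1 q.2)
    (cR : Continuous fun q : ℝ × (Fin (n + 1) → ℝ) => Rr q.1 q.2)
    (cC : Continuous fun q : ℝ × (Fin (n + 1) → ℝ) => C q.1 q.2)
    (cΨ : Continuous fun q : ℝ × (Fin (n + 1) → ℝ) => Ψ q.1 q.2)
    (hLRC : ∀ t x, L t x = Rr t x + β * C t x)
    (hCint : ∀ t ∈ Set.Icc (0 : ℝ) T,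
      (∫ x in Set.Icc (0 : Fin (n + 1) → ℝ) 1, C t x)
        = ∫ x in Set.Icc (0 : Fin (n + 1) → ℝ) 1, Ψ t x)
    (hFTC : ∀ x, (∫ t in Set.Icc (0 : ℝ) T, Ψ t x) = D x) :
    (∫ t in Set.Icc (0 : ℝ) T, ∫ x in Set.Icc (0 : Fin (n + 1) → ℝ) 1, L t x)
      = (∫ t in Set.Icc (0 : ℝ) T, ∫ x in Set.Icc (0 : Fin (n + 1) → ℝ) 1, Rr t x)
        + β * ∫ x in Set.Icc (0 : Fin (n + 1) → ℝ) 1, D x := by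
  set IT := Set.Icc (0 : ℝ) T
  set Ω := Set.Icc (0 : Fin (n + 1) → ℝ) 1
  have hS : IsCompact (IT ×ˢ Ω) := isCompact_Icc.prod isCompact_Icc
  have hInt : ∀ (f : ℝ × (Fin (n + 1) → ℝ) → ℝ), Continuous f →
      IntegrableOn f (IT ×ˢ Ω) (volume.prod volume) := by
    intro f hf
    rw [← MeasureTheory.Measure.volume_eq_prod]
    exact hf.continuousOn.integrableOn_compact hS
  have hIL := hInt _ cL
  have hIR := hInt _ cR
  have hIC := hInt _ cC
  have hIΨ := hInt _ cΨ
  have e1 : (∫ t in IT, ∫ x in Ω, L t x)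
      = ∫ q in IT ×ˢ Ω, L q.1 q.2 ∂(volume.prod volume) :=
    (setIntegral_prod _ hIL).symm
  have e2 : (∫ q in IT ×ˢ Ω, L q.1 q.2 ∂(volume.prod volume))
      = (∫ q in IT ×ˢ Ω, Rr q.1 q.2 ∂(volume.prod volume))
        + β * ∫ q in IT ×ˢ Ω, C q.1 q.2 ∂(volume.prod volume) := by
    have hfe : (fun q : ℝ × (Fin (n + 1) → ℝ) => L q.1 q.2)
        = fun q => Rr q.1 q.2 + β * C q.1 q.2 := funext fun q => hLRC q.1 q.2
    rw [hfe, integral_add hIR (hIC.const_mul β), integral_const_mul]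
  have e3 : (∫ q in IT ×ˢ Ω, Rr q.1 q.2 ∂(volume.prod volume))
      = ∫ t in IT, ∫ x in Ω, Rr t x := setIntegral_prod _ hIR
  have e4 : (∫ q in IT ×ˢ Ω, C q.1 q.2 ∂(volume.prod volume))
      = ∫ t in IT, ∫ x in Ω, C t x := setIntegral_prod _ hIC
  have e5 : (∫ t in IT, ∫ x in Ω, C t x) = ∫ t in IT, ∫ x in Ω, Ψ t x :=
    setIntegral_congr_fun measurableSet_Icc fun t ht => hCint t ht
  have e6 : (∫ t in IT, ∫ x in Ω, Ψ t x) = ∫ x in Ω, ∫ t in IT, Ψ t x := by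
    apply integral_integral_swap
    rw [Measure.prod_restrict]
    exact hIΨ
  have e7 : (∫ x in Ω, ∫ t in IT, Ψ t x) = ∫ x in Ω, D x :=
    setIntegral_congr_fun measurableSet_Icc fun x _ => hFTC x
  rw [e1, e2, e3, e4, e5, e6, e7]

/-- The integral identity behind the system mean-field control reformulation with `M`
species and `R` reactions: if `∂ₜρᵢ + ∇·mᵢ − Σₚ γᵢₚ sₚ = 0` on `[0,T] × [0,1]ᵈ` with
no-flux boundary conditions for each `mᵢ` on the cube (at a boundary point `x` with
`x j ∈ {0,1}` the outward normal is `∓eⱼ`), and `m̃ᵢ = mᵢ + βV₁ᵢ(ρᵢ)∇(Eᵢ′(ρᵢ))`,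
`s̃ₚ = sₚ + βV₂ₚ(ρ)Σⱼ γⱼₚ Eⱼ′(ρⱼ)`, then the kinetic energy in `(m̃, s̃)` equals the
kinetic energy in `(m, s)` plus the Fisher-information terms plus the total energy
difference `β Σᵢ ∫_Ω (Eᵢ(ρᵢ(T,·)) − Eᵢ(ρᵢ(0,·)))`. -/
theorem system_mfc_energy_identity (d : ℕ) (hd : 1 ≤ d) (T : ℝ) (hT : 0 < T)
    (β : ℝ) (M R : ℕ) (hM : 1 ≤ M) (hR : 1 ≤ R) (γ : Fin M → Fin R → ℝ)
    (V₁ : Fin M → ℝ → ℝ) (hV₁c : ∀ i, Continuous (V₁ i))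
    (hV₁pos : ∀ i r, 0 < V₁ i r)
    (V₂ : Fin R → (Fin M → ℝ) → ℝ) (hV₂c : ∀ p, Continuous (V₂ p))
    (hV₂pos : ∀ p v, 0 < V₂ p v)
    (E : Fin M → ℝ → ℝ) (hE : ∀ i, ContDiff ℝ 2 (E i))
    (ρ : Fin M → ℝ → (Fin d → ℝ) → ℝ)
    (hρ : ∀ i, ContDiff ℝ 1 (fun q : ℝ × (Fin d → ℝ) => ρ i q.1 q.2))
    (m : Fin M → ℝ → (Fin d → ℝ) → (Fin d → ℝ))
    (hmc : ∀ i, Continuous (fun q : ℝ × (Fin d → ℝ) => m i q.1 q.2))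
    (hmx : ∀ i t, ∀ j : Fin d, ContDiff ℝ 1 (fun x => m i t x j))
    (s : Fin R → ℝ → (Fin d → ℝ) → ℝ)
    (hsc : ∀ p, Continuous (fun q : ℝ × (Fin d → ℝ) => s p q.1 q.2))
    (hbc : ∀ i, ∀ t ∈ Set.Icc (0 : ℝ) T,
      ∀ x ∈ frontier (Set.Icc (0 : Fin d → ℝ) 1), ∀ j : Fin d,
        (x j = 0 ∨ x j = 1) → m i t x j = 0)
    (hpde : ∀ i, ∀ t ∈ Set.Icc (0 : ℝ) T, ∀ x ∈ Set.Icc (0 : Fin d → ℝ) 1,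
      deriv (fun τ => ρ i τ x) t + divg d (m i t) x
        - ∑ p, γ i p * s p t x = 0)
    (mt : Fin M → ℝ → (Fin d → ℝ) → (Fin d → ℝ))
    (st : Fin R → ℝ → (Fin d → ℝ) → ℝ)
    (hmt : ∀ i t x j, mt i t x j
      = m i t x j
        + β * (V₁ i (ρ i t x) * pd d (fun z => deriv (E i) (ρ i t z)) j x))
    (hst : ∀ p t x, st p t x
      = s p t x
        + β * (V₂ p (fun j => ρ j t x) * ∑ j, γ j p * deriv (E j) (ρ j t x))) :
    (∫ t in Set.Icc (0 : ℝ) T, ∫ x in Set.Icc (0 : Fin d → ℝ) 1,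
        ((∑ i, (∑ j, (mt i t x j) ^ 2) / (2 * V₁ i (ρ i t x)))
          + ∑ p, (st p t x) ^ 2 / (2 * V₂ p (fun j => ρ j t x))))
      = (∫ t in Set.Icc (0 : ℝ) T, ∫ x in Set.Icc (0 : Fin d → ℝ) 1,
          ((∑ i, ((∑ j, (m i t x j) ^ 2) / (2 * V₁ i (ρ i t x))
              + (β ^ 2 / 2) * V₁ i (ρ i t x)
                  * ∑ j, (pd d (fun z => deriv (E i) (ρ i t z)) j x) ^ 2))
            + ∑ p, ((s p t x) ^ 2 / (2 * V₂ p (fun j => ρ j t x))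
              + (β ^ 2 / 2) * V₂ p (fun j => ρ j t x)
                  * (∑ j, γ j p * deriv (E j) (ρ j t x)) ^ 2)))
        + β * ∑ i, ∫ x in Set.Icc (0 : Fin d → ℝ) 1,
            (E i (ρ i T x) - E i (ρ i 0 x)) := by
  obtain ⟨n, rfl⟩ : ∃ n, d = n + 1 := ⟨d - 1, (Nat.succ_pred_eq_of_pos hd).symm⟩
  -- basic smoothness and continuity facts
  have cρ : ∀ i, Continuous (fun q : ℝ × (Fin (n+1) → ℝ) => ρ i q.1 q.2) :=
    fun i => (hρ i).continuous
  have hEd : ∀ i, ContDiff ℝ 1 (deriv (E i)) := by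
    intro i
    have h2 : ContDiff ℝ ((1 : ℕ) + 1) (E i) := by exact_mod_cast hE i
    exact (contDiff_succ_iff_deriv.mp (by exact_mod_cast h2)).2.2
  have hΦ : ∀ i, ContDiff ℝ 1 (fun q : ℝ × (Fin (n+1) → ℝ) => deriv (E i) (ρ i q.1 q.2)) :=
    fun i => (hEd i).comp (hρ i)
  have cφ : ∀ i, Continuous (fun q : ℝ × (Fin (n+1) → ℝ) => deriv (E i) (ρ i q.1 q.2)) :=
    fun i => (hΦ i).continuous
  have hgeq : ∀ i (j : Fin (n+1)) t x, pd (n+1) (fun z => deriv (E i) (ρ i t z)) j x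
      = fderiv ℝ (fun q : ℝ × (Fin (n+1) → ℝ) => deriv (E i) (ρ i q.1 q.2)) (t, x)
          (0, Pi.single j 1) :=
    fun i j t x => aux_pd_full _ (hΦ i) t x j
  have cg : ∀ i (j : Fin (n+1)), Continuous
      (fun q : ℝ × (Fin (n+1) → ℝ) => pd (n+1) (fun z => deriv (E i) (ρ i q.1 z)) j q.2) :=
    fun i j => (aux_cont_fderiv_apply _ (hΦ i) _).congr fun q => (hgeq i j q.1 q.2).symm
  have hdtρ : ∀ i t (x : Fin (n+1) → ℝ), HasDerivAt (fun τ => ρ i τ x)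
      (fderiv ℝ (fun q : ℝ × (Fin (n+1) → ℝ) => ρ i q.1 q.2) (t, x) (1, 0)) t :=
    fun i t x => aux_deriv_full _ (hρ i) t x
  have cdt : ∀ i, Continuous
      (fun q : ℝ × (Fin (n+1) → ℝ) => deriv (fun τ => ρ i τ q.2) q.1) :=
    fun i => (aux_cont_fderiv_apply _ (hρ i) _).congr fun q => ((hdtρ i q.1 q.2).deriv).symm
  have cm : ∀ i (j : Fin (n+1)), Continuous (fun q : ℝ × (Fin (n+1) → ℝ) => m i q.1 q.2 j) :=
    fun i j => (continuous_apply j).comp (hmc i)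
  have cV1 : ∀ i, Continuous (fun q : ℝ × (Fin (n+1) → ℝ) => V₁ i (ρ i q.1 q.2)) :=
    fun i => (hV₁c i).comp (cρ i)
  have cV2 : ∀ p, Continuous (fun q : ℝ × (Fin (n+1) → ℝ) => V₂ p (fun j => ρ j q.1 q.2)) :=
    fun p => (hV₂c p).comp (continuous_pi fun j => cρ j)
  have cG : ∀ p, Continuous
      (fun q : ℝ × (Fin (n+1) → ℝ) => ∑ j, γ j p * deriv (E j) (ρ j q.1 q.2)) :=
    fun p => continuous_finset_sum _ fun j _ => continuous_const.mul (cφ j)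
  -- pointwise algebraic identity
  have halg : ∀ t x,
      ((∑ i, (∑ j, (mt i t x j) ^ 2) / (2 * V₁ i (ρ i t x)))
          + ∑ p, (st p t x) ^ 2 / (2 * V₂ p (fun j => ρ j t x)))
      = ((∑ i, ((∑ j, (m i t x j) ^ 2) / (2 * V₁ i (ρ i t x))
              + (β ^ 2 / 2) * V₁ i (ρ i t x)
                  * ∑ j, (pd (n+1) (fun z => deriv (E i) (ρ i t z)) j x) ^ 2))
            + ∑ p, ((s p t x) ^ 2 / (2 * V₂ p (fun j => ρ j t x))
              + (β ^ 2 / 2) * V₂ p (fun j => ρ j t x)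
                  * (∑ j, γ j p * deriv (E j) (ρ j t x)) ^ 2))
        + β * ((∑ i, ∑ j, m i t x j * pd (n+1) (fun z => deriv (E i) (ρ i t z)) j x)
             + ∑ p, s p t x * (∑ j, γ j p * deriv (E j) (ρ j t x))) := by
    intro t x
    have hm : ∀ i : Fin M, (∑ j, (mt i t x j) ^ 2) / (2 * V₁ i (ρ i t x))
        = (∑ j, (m i t x j) ^ 2) / (2 * V₁ i (ρ i t x))
          + (β ^ 2 / 2) * V₁ i (ρ i t x)
              * (∑ j, (pd (n+1) (fun z => deriv (E i) (ρ i t z)) j x) ^ 2)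
          + β * (∑ j, m i t x j * pd (n+1) (fun z => deriv (E i) (ρ i t z)) j x) := by
      intro i
      have := aux_sum_sq_div (fun j => m i t x j)
        (fun j => pd (n+1) (fun z => deriv (E i) (ρ i t z)) j x) β (V₁ i (ρ i t x))
        (hV₁pos i _)
      simp only [hmt]
      exact this
    have hp : ∀ p : Fin R, (st p t x) ^ 2 / (2 * V₂ p (fun j => ρ j t x))
        = (s p t x) ^ 2 / (2 * V₂ p (fun j => ρ j t x))
          + (β ^ 2 / 2) * V₂ p (fun j => ρ j t x)
              * (∑ j, γ j p * deriv (E j) (ρ j t x)) ^ 2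
          + β * (s p t x * (∑ j, γ j p * deriv (E j) (ρ j t x))) := by
      intro p
      have hV := hV₂pos p (fun j => ρ j t x)
      rw [hst]
      field_simp
      ring
    rw [Finset.sum_congr rfl fun i _ => hm i, Finset.sum_congr rfl fun p _ => hp p]
    simp only [Finset.sum_add_distrib, ← Finset.mul_sum]
    ring
  -- spatial identity via divergence theorem, for each fixed time
  have hCint : ∀ t ∈ Set.Icc (0:ℝ) T,
      (∫ x in Set.Icc (0 : Fin (n+1) → ℝ) 1,
        ((∑ i, ∑ j, m i t x j * pd (n+1) (fun z => deriv (E i) (ρ i t z)) j x)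
          + ∑ p, s p t x * (∑ j, γ j p * deriv (E j) (ρ j t x))))
      = ∫ x in Set.Icc (0 : Fin (n+1) → ℝ) 1,
          ∑ i, deriv (E i) (ρ i t x) * deriv (fun τ => ρ i τ x) t := by
    intro t ht
    have hφx : ∀ i, ContDiff ℝ 1 (fun x : Fin (n+1) → ℝ => deriv (E i) (ρ i t x)) :=
      fun i => (hΦ i).comp (contDiff_const.prodMk contDiff_id)
    have hFv : ∀ i (j : Fin (n+1)),
        ContDiff ℝ 1 (fun x : Fin (n+1) → ℝ => deriv (E i) (ρ i t x) * m i t x j) :=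
      fun i j => (hφx i).mul (hmx i t j)
    have hdivF0 : ∀ i, (∫ x in Set.Icc (0 : Fin (n+1) → ℝ) 1,
        divg (n+1) (fun y j => deriv (E i) (ρ i t y) * m i t y j) x) = 0 := by
      intro i
      refine aux_div_thm _ (fun j => hFv i j) ?_
      intro x hx j hj
      rw [hbc i t ht x (aux_mem_frontier x hx j hj) j hj, mul_zero]
    have hprod : ∀ i (x : Fin (n+1) → ℝ),
        divg (n+1) (fun y j => deriv (E i) (ρ i t y) * m i t y j) x
        = (∑ j, m i t x j * pd (n+1) (fun z => deriv (E i) (ρ i t z)) j x)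
          + deriv (E i) (ρ i t x) * divg (n+1) (m i t) x := by
      intro i x
      have hterm : ∀ j : Fin (n+1),
          pd (n+1) (fun y => deriv (E i) (ρ i t y) * m i t y j) j x
          = m i t x j * pd (n+1) (fun z => deriv (E i) (ρ i t z)) j x
            + deriv (E i) (ρ i t x) * pd (n+1) (fun y => m i t y j) j x := by
        intro j
        unfold pd
        rw [fderiv_fun_mul (((hφx i).differentiable one_ne_zero) x) (((hmx i t j).differentiable one_ne_zero) x)]
        simp only [ContinuousLinearMap.add_apply, ContinuousLinearMap.smul_apply, smul_eq_mul]
        ring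
      unfold divg
      rw [Finset.sum_congr rfl fun j _ => hterm j, Finset.sum_add_distrib, ← Finset.mul_sum]
    have hpt : ∀ x ∈ Set.Icc (0 : Fin (n+1) → ℝ) 1,
        ((∑ i, ∑ j, m i t x j * pd (n+1) (fun z => deriv (E i) (ρ i t z)) j x)
          + ∑ p, s p t x * (∑ j, γ j p * deriv (E j) (ρ j t x)))
        = (∑ i, divg (n+1) (fun y j => deriv (E i) (ρ i t y) * m i t y j) x)
          + ∑ i, deriv (E i) (ρ i t x) * deriv (fun τ => ρ i τ x) t := by
      intro x hx
      have hpde' : ∀ i, (∑ p, γ i p * s p t x)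
          = divg (n+1) (m i t) x + deriv (fun τ => ρ i τ x) t := by
        intro i; have := hpde i t ht x hx; linarith
      have hswap : (∑ p, s p t x * ∑ j, γ j p * deriv (E j) (ρ j t x))
          = ∑ i, deriv (E i) (ρ i t x) * ∑ p, γ i p * s p t x := by
        simp only [Finset.mul_sum]
        rw [Finset.sum_comm]
        exact Finset.sum_congr rfl fun i _ => Finset.sum_congr rfl fun p _ => by ring
      rw [hswap]
      simp only [fun i => hprod i x, hpde']
      simp only [mul_add, Finset.sum_add_distrib]
      ring
    rw [setIntegral_congr_fun measurableSet_Icc hpt]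
    have hIdiv : ∀ i, IntegrableOn
        (fun x => divg (n+1) (fun y j => deriv (E i) (ρ i t y) * m i t y j) x)
        (Set.Icc (0 : Fin (n+1) → ℝ) 1) := by
      intro i
      refine ContinuousOn.integrableOn_compact isCompact_Icc (Continuous.continuousOn ?_)
      exact continuous_finset_sum _ fun j _ =>
        ((hFv i j).continuous_fderiv one_ne_zero).clm_apply continuous_const
    have hIψ : IntegrableOn
        (fun x => ∑ i, deriv (E i) (ρ i t x) * deriv (fun τ => ρ i τ x) t)
        (Set.Icc (0 : Fin (n+1) → ℝ) 1) := by
      refine ContinuousOn.integrableOn_compact isCompact_Icc (Continuous.continuousOn ?_)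
      exact continuous_finset_sum _ fun i _ =>
        (((cφ i).comp (continuous_const.prodMk continuous_id)).mul
          ((cdt i).comp (continuous_const.prodMk continuous_id)))
    rw [integral_add (integrable_finset_sum _ fun i _ => hIdiv i) hIψ,
        integral_finset_sum _ fun i _ => hIdiv i,
        Finset.sum_congr rfl fun i _ => hdivF0 i]
    simp
  -- FTC in time, for each fixed point
  have hFTC : ∀ x : Fin (n+1) → ℝ,
      (∫ t in Set.Icc (0:ℝ) T, ∑ i, deriv (E i) (ρ i t x) * deriv (fun τ => ρ i τ x) t)
        = ∑ i, (E i (ρ i T x) - E i (ρ i 0 x)) := by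
    intro x
    have hcont : ∀ i : Fin M,
        Continuous (fun t => deriv (E i) (ρ i t x) * deriv (fun τ => ρ i τ x) t) :=
      fun i => ((cφ i).comp (continuous_id.prodMk continuous_const)).mul
        ((cdt i).comp (continuous_id.prodMk continuous_const))
    rw [MeasureTheory.integral_Icc_eq_integral_Ioc,
        ← intervalIntegral.integral_of_le hT.le,
        intervalIntegral.integral_finset_sum fun i _ => (hcont i).intervalIntegrable 0 T]
    refine Finset.sum_congr rfl fun i _ => ?_
    refine intervalIntegral.integral_eq_sub_of_hasDerivAt (f := fun u => E i (ρ i u x)) (fun τ _ => ?_)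
      ((hcont i).intervalIntegrable 0 T)
    have h1 : HasDerivAt (fun u => ρ i u x) (deriv (fun u => ρ i u x) τ) τ :=
      (hdtρ i τ x).differentiableAt.hasDerivAt
    have h2 : HasDerivAt (E i) (deriv (E i) (ρ i τ x)) (ρ i τ x) :=
      ((hE i).differentiable two_ne_zero (ρ i τ x)).hasDerivAt
    exact h2.comp τ h1
  -- continuity of the four integrands
  have cC : Continuous (fun q : ℝ × (Fin (n+1) → ℝ) =>
      (∑ i, ∑ j, m i q.1 q.2 j * pd (n+1) (fun z => deriv (E i) (ρ i q.1 z)) j q.2)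
        + ∑ p, s p q.1 q.2 * (∑ j, γ j p * deriv (E j) (ρ j q.1 q.2))) := by
    refine Continuous.add ?_ ?_
    · exact continuous_finset_sum _ fun i _ =>
        continuous_finset_sum _ fun j _ => (cm i j).mul (cg i j)
    · exact continuous_finset_sum _ fun p _ => (hsc p).mul (cG p)
  have cR : Continuous (fun q : ℝ × (Fin (n+1) → ℝ) =>
      ((∑ i, ((∑ j, (m i q.1 q.2 j) ^ 2) / (2 * V₁ i (ρ i q.1 q.2))
          + (β ^ 2 / 2) * V₁ i (ρ i q.1 q.2)
              * ∑ j, (pd (n+1) (fun z => deriv (E i) (ρ i q.1 z)) j q.2) ^ 2))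
        + ∑ p, ((s p q.1 q.2) ^ 2 / (2 * V₂ p (fun j => ρ j q.1 q.2))
          + (β ^ 2 / 2) * V₂ p (fun j => ρ j q.1 q.2)
              * (∑ j, γ j p * deriv (E j) (ρ j q.1 q.2)) ^ 2))) := by
    refine Continuous.add ?_ ?_
    · refine continuous_finset_sum _ fun i _ => Continuous.add ?_ ?_
      · exact (continuous_finset_sum _ fun j _ => (cm i j).pow 2).div
          (continuous_const.mul (cV1 i))
          (fun q => ne_of_gt (by have := hV₁pos i (ρ i q.1 q.2); positivity))
      · exact (continuous_const.mul (cV1 i)).mul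
          (continuous_finset_sum _ fun j _ => (cg i j).pow 2)
    · refine continuous_finset_sum _ fun p _ => Continuous.add ?_ ?_
      · exact ((hsc p).pow 2).div (continuous_const.mul (cV2 p))
          (fun q => ne_of_gt (by have := hV₂pos p (fun j => ρ j q.1 q.2); positivity))
      · exact (continuous_const.mul (cV2 p)).mul ((cG p).pow 2)
  have cΨ : Continuous (fun q : ℝ × (Fin (n+1) → ℝ) =>
      ∑ i, deriv (E i) (ρ i q.1 q.2) * deriv (fun τ => ρ i τ q.2) q.1) :=
    continuous_finset_sum _ fun i _ => (cφ i).mul (cdt i)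
  have cL : Continuous (fun q : ℝ × (Fin (n+1) → ℝ) =>
      ((∑ i, (∑ j, (mt i q.1 q.2 j) ^ 2) / (2 * V₁ i (ρ i q.1 q.2)))
        + ∑ p, (st p q.1 q.2) ^ 2 / (2 * V₂ p (fun j => ρ j q.1 q.2)))) :=
    (cR.add (continuous_const.mul cC)).congr fun q => (halg q.1 q.2).symm
  -- assemble
  have key := aux_main_core hT β _ _ _ _
    (fun x => ∑ i, (E i (ρ i T x) - E i (ρ i 0 x)))
    cL cR cC cΨ halg hCint hFTC
  have hDsplit : (∫ x in Set.Icc (0 : Fin (n+1) → ℝ) 1,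
        ∑ i, (E i (ρ i T x) - E i (ρ i 0 x)))
      = ∑ i, ∫ x in Set.Icc (0 : Fin (n+1) → ℝ) 1, (E i (ρ i T x) - E i (ρ i 0 x)) := by
    refine integral_finset_sum _ fun i _ => ?_
    refine ContinuousOn.integrableOn_compact isCompact_Icc (Continuous.continuousOn ?_)
    exact (((hE i).continuous).comp ((cρ i).comp (continuous_const.prodMk continuous_id))).sub
      (((hE i).continuous).comp ((cρ i).comp (continuous_const.prodMk continuous_id)))
  rw [hDsplit] at key
  exact key
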